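/- For m odd and 1 ≤ k ≤ (m+1)/2, the rational function F_k(y) = (y_1 + y_2 + ⋯ + y_{2k-1}) · (y_{2k+1} y_{2k+3} ⋯ y_m)/(y_{2k} y_{2k+2} ⋯ y_{m-1}) is a constant of motion of the Lotka-Volterra system: along any solution with nonvanishing denominator, d/dt F_k(y(t)) = 0. -/

import Mathlib

open Finset

private lemma lv_antisym (f : ℕ → ℝ) (N : ℕ) :
    ∑ l ∈ Finset.Icc 1 N, f l * (∑ j ∈ Finset.Ioc l N, f j - ∑ j ∈ Finset.Ico 1 l, f j) = 0 := by
  have h1 : ∀ l ∈ Finset.Icc 1 N,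
      f l * (∑ j ∈ Finset.Ioc l N, f j - ∑ j ∈ Finset.Ico 1 l, f j)
      = (∑ j ∈ Finset.Icc 1 N, if l < j then f l * f j else 0)
        - (∑ j ∈ Finset.Icc 1 N, if j < l then f l * f j else 0) := by
    intro l hl
    simp only [Finset.mem_Icc] at hl
    have e1 : Finset.Ioc l N = (Finset.Icc 1 N).filter (fun j => l < j) := by
      ext j; simp only [Finset.mem_Ioc, Finset.mem_Icc, Finset.mem_filter]; omega
    have e2 : Finset.Ico 1 l = (Finset.Icc 1 N).filter (fun j => j < l) := by
      ext j; simp only [Finset.mem_Ico, Finset.mem_Icc, Finset.mem_filter]; omega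
    rw [mul_sub, Finset.mul_sum, Finset.mul_sum, e1, e2, Finset.sum_filter, Finset.sum_filter]
  rw [Finset.sum_congr rfl h1, Finset.sum_sub_distrib]
  have h2 : ∑ l ∈ Finset.Icc 1 N, ∑ j ∈ Finset.Icc 1 N, (if j < l then f l * f j else 0)
      = ∑ l ∈ Finset.Icc 1 N, ∑ j ∈ Finset.Icc 1 N, (if l < j then f l * f j else 0) := by
    rw [Finset.sum_comm]
    apply Finset.sum_congr rfl; intro a _; apply Finset.sum_congr rfl; intro b _
    split <;> [rw [mul_comm]; rfl]
  rw [h2, sub_self]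

private lemma lv_pairsum (f : ℕ → ℝ) (k : ℕ) : ∀ n : ℕ,
    ∑ j ∈ Finset.Icc (2 * k) (2 * (k + n) + 1), f j
      = ∑ s ∈ Finset.Icc k (k + n), (f (2 * s) + f (2 * s + 1)) := by
  intro n
  induction n with
  | zero =>
    rw [show k + 0 = k from rfl,       Finset.sum_Icc_succ_top (by omega : 2 * k ≤ 2 * k + 1), Finset.Icc_self,
      Finset.Icc_self, Finset.sum_singleton, Finset.sum_singleton]
  | succ n ih =>
    rw [show k + (n + 1) = (k + n) + 1 from by ring,
      Finset.sum_Icc_succ_top (f := fun s => f (2 * s) + f (2 * s + 1))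
        (by omega : k ≤ (k + n) + 1),
      show 2 * ((k + n) + 1) + 1 = (2 * (k + n) + 1 + 1) + 1 from by ring,
      Finset.sum_Icc_succ_top (by omega : 2 * k ≤ 2 * (k + n) + 1 + 1 + 1),
      Finset.sum_Icc_succ_top (by omega : 2 * k ≤ 2 * (k + n) + 1 + 1), ih,
      show 2 * ((k + n) + 1) = 2 * (k + n) + 1 + 1 from by ring]
    ring

/-- for `m` odd and `1 ≤ k ≤ (m+1)/2`, the function
`F_k = (y_1 + ⋯ + y_{2k-1}) ∏_{s=k}^{(m-1)/2} y_{2s+1}/y_{2s}`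
is a constant of motion of the Lotka-Volterra system. -/
theorem lv_Fk_conserved_odd (m : ℕ) (hm : Odd m) (k : ℕ) (hk1 : 1 ≤ k) (hk2 : k ≤ (m + 1) / 2)
    (y : ℝ → ℕ → ℝ)
    (hy : ∀ i ∈ Finset.Icc 1 m, ∀ t : ℝ, HasDerivAt (fun s => y s i)
      (y t i * (-(∑ j ∈ Finset.Ico 1 i, y t j) + ∑ j ∈ Finset.Ioc i m, y t j)) t)
    (hnz : ∀ t : ℝ, ∀ s ∈ Finset.Icc k ((m - 1) / 2), y t (2 * s) ≠ 0) (t : ℝ) :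
    HasDerivAt (fun τ => (∑ l ∈ Finset.Icc 1 (2 * k - 1), y τ l) *
      ∏ s ∈ Finset.Icc k ((m - 1) / 2), y τ (2 * s + 1) / y τ (2 * s)) 0 t := by
  obtain ⟨c, hc⟩ := hm
  have hM : (m - 1) / 2 = c := by omega
  have hkc : k ≤ c + 1 := by omega
  set N := 2 * k - 1 with hN
  have hNm : N ≤ m := by omega
  set S : ℝ := ∑ l ∈ Finset.Icc 1 N, y t l with hS
  set T : ℝ := ∑ j ∈ Finset.Icc (2 * k) m, y t j with hT
  set P : ℝ := ∏ s ∈ Finset.Icc k c, y t (2 * s + 1) / y t (2 * s) with hP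
  -- derivative of the sum part
  have hSder : HasDerivAt (fun τ => ∑ l ∈ Finset.Icc 1 N, y τ l) (S * T) t := by
    have hsum : HasDerivAt (fun τ => ∑ l ∈ Finset.Icc 1 N, y τ l)
        (∑ l ∈ Finset.Icc 1 N,
          y t l * (-(∑ j ∈ Finset.Ico 1 l, y t j) + ∑ j ∈ Finset.Ioc l m, y t j)) t := by
      apply HasDerivAt.fun_sum
      intro l hl
      exact hy l (by simp only [Finset.mem_Icc] at hl ⊢; omega) t
    have hsplit : ∀ l ∈ Finset.Icc 1 N,
        y t l * (-(∑ j ∈ Finset.Ico 1 l, y t j) + ∑ j ∈ Finset.Ioc l m, y t j)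
        = y t l * (∑ j ∈ Finset.Ioc l N, y t j - ∑ j ∈ Finset.Ico 1 l, y t j) + y t l * T := by
      intro l hl
      simp only [Finset.mem_Icc] at hl
      have e1 : (∑ j ∈ Finset.Ioc l N, y t j) + ∑ j ∈ Finset.Ioc N m, y t j
          = ∑ j ∈ Finset.Ioc l m, y t j :=
        Finset.sum_Ioc_consecutive _ hl.2 hNm
      have e2 : Finset.Icc (2 * k) m = Finset.Ioc N m := by
        have : 2 * k = N + 1 := by omega
        rw [this, Finset.Icc_add_one_left_eq_Ioc]
      rw [hT, e2, ← e1]; ring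
    rw [Finset.sum_congr rfl hsplit, Finset.sum_add_distrib, lv_antisym, zero_add,
      ← Finset.sum_mul] at hsum
    exact hsum
  -- derivative of the product part
  have hPder : HasDerivAt (fun τ => ∏ s ∈ Finset.Icc k c, y τ (2 * s + 1) / y τ (2 * s))
      (S * T * P + S * 0) t → True := fun _ => trivial
  clear hPder
  have hfac : ∀ s ∈ Finset.Icc k c, HasDerivAt (fun τ => y τ (2 * s + 1) / y τ (2 * s))
      ((y t (2 * s + 1) / y t (2 * s)) * (-(y t (2 * s) + y t (2 * s + 1)))) t := by
    intro s hs
    simp only [Finset.mem_Icc] at hs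
    have hden := hy (2 * s) (by simp only [Finset.mem_Icc]; omega) t
    have hnum := hy (2 * s + 1) (by simp only [Finset.mem_Icc]; omega) t
    have hz : y t (2 * s) ≠ 0 := hnz t s (by simp only [Finset.mem_Icc]; omega)
    have hdiv := hnum.div hden hz
    refine hdiv.congr_deriv ?_
    have e1 : ∑ j ∈ Finset.Ico 1 (2 * s + 1), y t j
        = (∑ j ∈ Finset.Ico 1 (2 * s), y t j) + y t (2 * s) :=
      Finset.sum_Ico_succ_top (by omega) _
    have e2 : (∑ j ∈ Finset.Ioc (2 * s) (2 * s + 1), y t j) + ∑ j ∈ Finset.Ioc (2 * s + 1) m, y t j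
        = ∑ j ∈ Finset.Ioc (2 * s) m, y t j :=
      Finset.sum_Ioc_consecutive _ (by omega) (by omega)
    have e3 : Finset.Ioc (2 * s) (2 * s + 1) = {2 * s + 1} := by
      ext j; simp only [Finset.mem_Ioc, Finset.mem_singleton]; omega
    rw [e3, Finset.sum_singleton] at e2
    rw [e1, ← e2]
    field_simp
    ring
  have hprod := HasDerivAt.fun_finsetProd hfac
  have hterm : ∀ s ∈ Finset.Icc k c,
      (∏ j ∈ (Finset.Icc k c).erase s, y t (2 * j + 1) / y t (2 * j)) •
        ((y t (2 * s + 1) / y t (2 * s)) * (-(y t (2 * s) + y t (2 * s + 1))))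
      = P * (-(y t (2 * s) + y t (2 * s + 1))) := by
    intro s hs
    rw [smul_eq_mul, hP, ← Finset.mul_prod_erase _ _ hs]
    ring
  rw [Finset.sum_congr rfl hterm, ← Finset.mul_sum] at hprod
  have hTsum : ∑ s ∈ Finset.Icc k c, -(y t (2 * s) + y t (2 * s + 1)) = -T := by
    rw [Finset.sum_neg_distrib, hT, neg_inj]
    rcases Nat.lt_or_ge c k with hck | hck
    · have h1 : Finset.Icc k c = ∅ := by
        apply Finset.Icc_eq_empty; omega
      have h2 : Finset.Icc (2 * k) m = ∅ := by
        apply Finset.Icc_eq_empty; omega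
      rw [h1, h2, Finset.sum_empty, Finset.sum_empty]
    · have := lv_pairsum (y t) k (c - k)
      have hck2 : k + (c - k) = c := by omega
      rw [hck2] at this
      rw [show m = 2 * c + 1 from by omega]
      exact this.symm
  rw [hTsum] at hprod
  have hfin := hSder.mul hprod
  rw [hM]
  refine hfin.congr_deriv ?_
  ring
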